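/- Let 2 ≤ k ≤ n and let v_0,…,v_n be affinely independent points in ℝ^n forming an n-simplex S with vertex Gramians G_0,…,G_n. Suppose every k×k principal submatrix of every vertex Gramian G_ℓ has an inverse that is a weakly diagonally dominant Stieltjes matrix (i.e., all k-dimensional faces of S are nonobtuse simplices), and suppose that for every m with k < m ≤ n, every m×m principal submatrix of every vertex Gramian G_ℓ is nonblocking. Then the inverse of every vertex Gramian of S is a weakly diagonally dominant Stieltjes matrix (i.e., S is a nonobtuse simplex). -/

import Mathlib

open Matrix Finset
open scoped RealInnerProductSpace

noncomputable section

/-- The vertex Gramian of the simplex with vertices `v` associated with vertex `v ℓ`. -/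
def vGram {n : ℕ} (v : Fin (n + 1) → EuclideanSpace ℝ (Fin n)) (ℓ : Fin (n + 1)) :
    Matrix {k : Fin (n + 1) // k ≠ ℓ} {k : Fin (n + 1) // k ≠ ℓ} ℝ :=
  Matrix.of fun i j => ⟪v i.1 - v ℓ, v j.1 - v ℓ⟫

/-- A Stieltjes matrix: symmetric positive definite with nonpositive off-diagonal entries. -/
def IsStieltjes {ι : Type*} [Fintype ι] (M : Matrix ι ι ℝ) : Prop :=
  M.PosDef ∧ ∀ i j, i ≠ j → M i j ≤ 0

/-- Weakly diagonally dominant: `M e ≥ 0` entrywise for the all-ones vector `e`. -/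
def IsWDD {ι : Type*} [Fintype ι] (M : Matrix ι ι ℝ) : Prop :=
  ∀ i, 0 ≤ ∑ j, M i j

/-- Pointwise weakly diagonally dominant: each diagonal entry is maximal in its row. -/
def PWDD {ι : Type*} (M : Matrix ι ι ℝ) : Prop :=
  ∀ i j, M i j ≤ M i i

/-- The orthogonal projection of `x` onto the affine span of `{v k : k ∈ s}`
lies in the convex hull of `{v k : k ∈ s}`. -/
def ProjInHull {n : ℕ} (x : EuclideanSpace ℝ (Fin n))
    (v : Fin (n + 1) → EuclideanSpace ℝ (Fin n)) (s : Set (Fin (n + 1))) : Prop :=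
  ∃ p ∈ convexHull ℝ (v '' s), ∀ a ∈ s, ∀ b ∈ s, ⟪x - p, v a - v b⟫ = 0

/-- All facets of the simplex are nonobtuse: each vertex `v i` projects, for each `j ≠ i`,
into the convex hull of the vertices other than `v i, v j`. -/
def FacetsNonobtuse {n : ℕ} (v : Fin (n + 1) → EuclideanSpace ℝ (Fin n)) : Prop :=
  ∀ i j : Fin (n + 1), i ≠ j → ProjInHull (v i) v {k | k ≠ i ∧ k ≠ j}

/-- `q` is an inward normal to the facet opposite `v j`. -/
def IsInwardNormal {n : ℕ} (v : Fin (n + 1) → EuclideanSpace ℝ (Fin n)) (j : Fin (n + 1))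
    (q : EuclideanSpace ℝ (Fin n)) : Prop :=
  q ≠ 0 ∧ (∀ a b : Fin (n + 1), a ≠ j → b ≠ j → ⟪q, v a - v b⟫ = 0) ∧
    ∀ k : Fin (n + 1), k ≠ j → 0 < ⟪q, v j - v k⟫

/-- The `j`-th column of `A` is a blocking column: no off-diagonal entry of column `j`
is minimal in its row. -/
def IsBlockingCol {ι : Type*} (A : Matrix ι ι ℝ) (j : ι) : Prop :=
  ∀ i, i ≠ j → ∃ k, A i k < A i j

/-- `A` is nonblocking: every column has an off-diagonal entry minimal in its row. -/
def IsNonblocking {ι : Type*} (A : Matrix ι ι ℝ) : Prop :=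
  ∀ j, ∃ i, i ≠ j ∧ ∀ k, A i j ≤ A i k

/-- A (symmetric nonnegative) ultrametric matrix. -/
def IsUltra {ι : Type*} (A : Matrix ι ι ℝ) : Prop :=
  (∀ i j, 0 ≤ A i j) ∧ (∀ i j, A i j ≤ A i i) ∧ ∀ i j k, min (A i k) (A k j) ≤ A i j

/-- The principal submatrix of `A` with rows and columns restricted to `s`. -/
def subMat {ι : Type*} (A : Matrix ι ι ℝ) (s : Finset ι) :
    Matrix {x // x ∈ s} {x // x ∈ s} ℝ :=
  A.submatrix (fun i => i.1) (fun j => j.1)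

/-- The principal submatrix of `A` obtained by deleting row and column `m`. -/
def delMat {ι : Type*} (A : Matrix ι ι ℝ) (m : ι) : Matrix {i // i ≠ m} {i // i ≠ m} ℝ :=
  A.submatrix (fun i => i.1) (fun j => j.1)

section Tetra

variable {V : Type*} [NormedAddCommGroup V] [InnerProductSpace ℝ V]

/-- The triangle with vertices `a, b, c` is nonobtuse. -/
def NonobtuseTri (a b c : V) : Prop :=
  0 ≤ ⟪b - a, c - a⟫ ∧ 0 ≤ ⟪a - b, c - b⟫ ∧ 0 ≤ ⟪a - c, b - c⟫

/-- The sub-orthocentric set of the triangle `a b c`: the union over the vertices of the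
closed segments from the vertex to the orthocenter. -/
def SubOrthoSet (a b c : V) : Set V :=
  {x | ∃ h, h ∈ affineSpan ℝ ({a, b, c} : Set V) ∧
    ⟪h - a, b - c⟫ = 0 ∧ ⟪h - b, a - c⟫ = 0 ∧
    (x ∈ segment ℝ a h ∨ x ∈ segment ℝ b h ∨ x ∈ segment ℝ c h)}

/-- `p` is the orthogonal projection of `x` onto the affine span of `{a, b, c}`. -/
def IsOrthProjTri (x p a b c : V) : Prop :=
  p ∈ affineSpan ℝ ({a, b, c} : Set V) ∧ ⟪x - p, b - a⟫ = 0 ∧ ⟪x - p, c - a⟫ = 0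

/-- A sub-orthocentric tetrahedron: all triangular faces are nonobtuse and each vertex
projects orthogonally into the sub-orthocentric set of its opposite face. -/
def IsSubOrthoTetra (w : Fin 4 → V) : Prop :=
  ∀ i : Fin 4,
    NonobtuseTri (w (i.succAbove 0)) (w (i.succAbove 1)) (w (i.succAbove 2)) ∧
    ∃ p, IsOrthProjTri (w i) p (w (i.succAbove 0)) (w (i.succAbove 1)) (w (i.succAbove 2)) ∧
      p ∈ SubOrthoSet (w (i.succAbove 0)) (w (i.succAbove 1)) (w (i.succAbove 2))

end Tetra



variable {n : ℕ}

/-- Span of the differences of the points of `S`. -/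
def Wsp (v : Fin (n + 1) → EuclideanSpace ℝ (Fin n)) (S : Finset (Fin (n + 1))) :
    Submodule ℝ (EuclideanSpace ℝ (Fin n)) :=
  Submodule.span ℝ (Set.image2 (fun b d => v b - v d) (S : Set (Fin (n + 1))) S)

/-- Dual family (inward normals, normalized) of the face with vertex set `S`. -/
def DF (v : Fin (n + 1) → EuclideanSpace ℝ (Fin n)) (S : Finset (Fin (n + 1)))
    (q : Fin (n + 1) → EuclideanSpace ℝ (Fin n)) : Prop :=
  (∀ a ∈ S, ∀ b ∈ S, ∀ d ∈ S,
      ⟪q a, v b - v d⟫ = ((if a = b then (1 : ℝ) else 0) - if a = d then 1 else 0)) ∧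
  (∑ a ∈ S, q a) = 0 ∧ ∀ a ∈ S, q a ∈ Wsp v S

/-- The face with vertex set `S` is nonobtuse. -/
def Nobt (v : Fin (n + 1) → EuclideanSpace ℝ (Fin n)) (S : Finset (Fin (n + 1))) : Prop :=
  ∃ q, DF v S q ∧ ∀ x ∈ S, ∀ y ∈ S, x ≠ y → ⟪q x, q y⟫ ≤ 0

lemma DF.expand {v : Fin (n + 1) → EuclideanSpace ℝ (Fin n)} {S : Finset (Fin (n + 1))}
    {q : Fin (n + 1) → EuclideanSpace ℝ (Fin n)} (h : DF v S q)
    {w : EuclideanSpace ℝ (Fin n)} (hw : w ∈ Wsp v S) {z : Fin (n + 1)} (hz : z ∈ S) :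
    w = ∑ j ∈ S, ⟪w, q j⟫ • (v j - v z) := by
  induction hw using Submodule.span_induction with
  | mem x hx =>
    obtain ⟨b, hb, d, hd, rfl⟩ := hx
    rw [Finset.mem_coe] at hb hd
    have : ∀ j ∈ S, ⟪v b - v d, q j⟫ • (v j - v z)
        = (if j = b then (1:ℝ) else 0) • (v j - v z) - (if j = d then (1:ℝ) else 0) • (v j - v z) := by
      intro j hj
      rw [real_inner_comm, h.1 j hj b hb d hd, sub_smul]
    rw [Finset.sum_congr rfl this, Finset.sum_sub_distrib]
    simp only [ite_smul, one_smul, zero_smul]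
    rw [Finset.sum_ite_eq' S b fun j => v j - v z, Finset.sum_ite_eq' S d fun j => v j - v z,
      if_pos hb, if_pos hd]
    abel
  | zero => simp
  | add x y _ _ hx hy =>
    calc x + y = (∑ j ∈ S, ⟪x, q j⟫ • (v j - v z)) + ∑ j ∈ S, ⟪y, q j⟫ • (v j - v z) := by
          rw [← hx, ← hy]
      _ = _ := by rw [← Finset.sum_add_distrib]; congr 1; ext j; rw [← add_smul, ← inner_add_left]
  | smul a x _ hx =>
    calc a • x = a • ∑ j ∈ S, ⟪x, q j⟫ • (v j - v z) := by rw [← hx]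
      _ = _ := by
          rw [Finset.smul_sum]; congr 1; ext j
          rw [smul_smul, real_inner_smul_left]

/-- Representation of a dual vector as combination of edge vectors out of `x`. -/
lemma DF.repr {v : Fin (n + 1) → EuclideanSpace ℝ (Fin n)} {S : Finset (Fin (n + 1))}
    {q : Fin (n + 1) → EuclideanSpace ℝ (Fin n)} (h : DF v S q) {x : Fin (n + 1)} (hx : x ∈ S) :
    q x = ∑ j ∈ S, ⟪q x, q j⟫ • (v j - v x) :=
  h.expand (h.2.2 x hx) hx


lemma gram_posDef {ι : Type*} [Fintype ι] [DecidableEq ι]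
    {u : ι → EuclideanSpace ℝ (Fin n)}
    {M : Matrix ι ι ℝ} (hMu : ∀ i j, M i j = ⟪u i, u j⟫) (hu : LinearIndependent ℝ u) :
    M.PosDef := by
  refine Matrix.PosDef.of_dotProduct_mulVec_pos ?_ ?_
  · ext i j
    simp [Matrix.conjTranspose_apply, hMu, real_inner_comm (u i) (u j)]
  · intro x hx
    have key : dotProduct (star x) (M *ᵥ x) = ⟪∑ i, x i • u i, ∑ j, x j • u j⟫ := by
      rw [sum_inner]
      simp only [dotProduct, Matrix.mulVec, star_trivial]
      refine Finset.sum_congr rfl fun i _ => ?_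
      rw [real_inner_smul_left, inner_sum]
      congr 1
      refine Finset.sum_congr rfl fun j _ => ?_
      rw [real_inner_smul_right, hMu]
      ring
    rw [key]
    have hne : (∑ i, x i • u i) ≠ 0 := by
      intro h0
      exact hx (funext fun i => Fintype.linearIndependent_iff.mp hu x h0 i)
    rw [real_inner_self_eq_norm_mul_norm]
    exact mul_pos (norm_pos_iff.mpr hne) (norm_pos_iff.mpr hne)

lemma vsub_linIndep {v : Fin (n + 1) → EuclideanSpace ℝ (Fin n)}
    (hv : AffineIndependent ℝ v) (c : Fin (n + 1)) (s : Finset {x : Fin (n + 1) // x ≠ c}) :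
    LinearIndependent ℝ (fun i : {x // x ∈ s} => v i.1.1 - v c) := by
  have h1 := (affineIndependent_iff_linearIndependent_vsub ℝ v c).mp hv
  have h2 : LinearIndependent ℝ ((fun i : {x : Fin (n + 1) // x ≠ c} => v i.1 -ᵥ v c) ∘
      (fun i : {x // x ∈ s} => i.1)) := h1.comp _ Subtype.coe_injective
  exact h2

lemma subMat_posDef {v : Fin (n + 1) → EuclideanSpace ℝ (Fin n)}
    (hv : AffineIndependent ℝ v) (c : Fin (n + 1)) (s : Finset {x : Fin (n + 1) // x ≠ c}) :
    (subMat (vGram v c) s).PosDef :=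
  gram_posDef (fun i j => rfl) (vsub_linIndep hv c s)

lemma build {v : Fin (n + 1) → EuclideanSpace ℝ (Fin n)}
    (hv : AffineIndependent ℝ v) (c : Fin (n + 1)) (s : Finset {x : Fin (n + 1) // x ≠ c}) :
    ∃ q : Fin (n + 1) → EuclideanSpace ℝ (Fin n),
      DF v (insert c (s.image Subtype.val)) q ∧
      (∀ i j : {x // x ∈ s}, ⟪q i.1.1, q j.1.1⟫ = (subMat (vGram v c) s)⁻¹ i j) ∧
      (∀ i : {x // x ∈ s}, ⟪q i.1.1, q c⟫ = -∑ j, (subMat (vGram v c) s)⁻¹ i j) := by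
  classical
  set S' := insert c (s.image Subtype.val) with hS'
  have hcS' : c ∈ S' := Finset.mem_insert_self _ _
  have hMpd : (subMat (vGram v c) s).PosDef := subMat_posDef hv c s
  set M := subMat (vGram v c) s with hMdef
  set N := M⁻¹ with hNdef
  have hNM : N * M = 1 := Matrix.nonsing_inv_mul _ hMpd.det_pos.ne'.isUnit
  have hNsymm : ∀ i j, N i j = N j i := by
    have h : M⁻¹.IsHermitian := hMpd.inv.isHermitian
    intro i j
    have e : M⁻¹ i j = M⁻¹ᴴ i j := by rw [h]
    rw [hNdef, e, Matrix.conjTranspose_apply, star_trivial]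
  set u : {x // x ∈ s} → EuclideanSpace ℝ (Fin n) := fun i => v i.1.1 - v c with hu
  set q0 : {x // x ∈ s} → EuclideanSpace ℝ (Fin n) := fun i => ∑ j, N i j • u j with hq0
  have hq0u : ∀ i b : {x // x ∈ s}, ⟪q0 i, u b⟫ = if i = b then (1:ℝ) else 0 := by
    intro i b
    have e1 : ⟪q0 i, u b⟫ = ∑ j, N i j * M j b := by
      simp only [hq0]
      rw [sum_inner]
      exact Finset.sum_congr rfl fun j _ => by rw [real_inner_smul_left]; rfl
    rw [e1]
    have := congrFun (congrFun hNM i) b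
    simpa [Matrix.mul_apply, Matrix.one_apply] using this
  set q : Fin (n + 1) → EuclideanSpace ℝ (Fin n) := fun a =>
    if a = c then -(∑ i, q0 i) else ∑ i : {x // x ∈ s}, if i.1.1 = a then q0 i else 0 with hq
  have hqc : q c = -(∑ i, q0 i) := by simp [hq]
  have hqa : ∀ i : {x // x ∈ s}, q i.1.1 = q0 i := by
    intro i
    simp only [hq]
    rw [if_neg i.1.2]
    rw [Finset.sum_eq_single i
      (fun j _ hj => if_neg fun h => hj (Subtype.ext (Subtype.ext h)))
      (fun h => absurd (Finset.mem_univ i) h)]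
    rw [if_pos rfl]
  have hmem : ∀ a ∈ S', a = c ∨ ∃ i : {x // x ∈ s}, i.1.1 = a := by
    intro a ha
    rcases Finset.mem_insert.mp ha with h | h
    · exact Or.inl h
    · obtain ⟨x, hx, hxa⟩ := Finset.mem_image.mp h
      exact Or.inr ⟨⟨x, hx⟩, hxa⟩
  have hQ0 : ∀ i j : {x // x ∈ s}, ⟪q0 i, q0 j⟫ = N i j := by
    intro i j
    have e : ⟪q0 i, q0 j⟫ = ∑ k, N j k * ⟪q0 i, u k⟫ := by
      conv_lhs => rw [hq0]
      rw [inner_sum]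
      exact Finset.sum_congr rfl fun k _ => by rw [real_inner_smul_right]
    rw [e]
    simp only [hq0u, mul_ite, mul_one, mul_zero]
    rw [Finset.sum_ite_eq Finset.univ i fun k => N j k, if_pos (Finset.mem_univ i)]
    exact hNsymm j i
  have hP : ∀ a ∈ S', ∀ b ∈ S',
      ⟪q a, v b - v c⟫ = (if a = b then (1:ℝ) else 0) - (if a = c then 1 else 0) := by
    intro a ha b hb
    rcases hmem b hb with hbc | ⟨ib, hib⟩
    · rw [hbc]
      simp
    · subst hib
      rcases hmem a ha with hac | ⟨ia, hia⟩
      · rw [hac, hqc]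
        have e : ⟪-(∑ i, q0 i), v ib.1.1 - v c⟫ = -∑ i, ⟪q0 i, u ib⟫ := by
          rw [inner_neg_left, sum_inner]
        rw [e]
        simp only [hq0u]
        rw [Finset.sum_ite_eq' Finset.univ ib fun _ => (1:ℝ), if_pos (Finset.mem_univ ib)]
        rw [if_neg (fun h => ib.1.2 h.symm)]
        norm_num
      · subst hia
        rw [hqa]
        have e : ⟪q0 ia, v ib.1.1 - v c⟫ = ⟪q0 ia, u ib⟫ := rfl
        rw [e, hq0u, if_neg ia.1.2]
        by_cases h : ia = ib
        · subst h; rw [if_pos rfl, if_pos rfl]; norm_num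
        · rw [if_neg h, if_neg (fun hh => h (Subtype.ext (Subtype.ext hh)))]; norm_num
  have hprod : ∀ a ∈ S', ∀ b ∈ S', ∀ d ∈ S',
      ⟪q a, v b - v d⟫ = ((if a = b then (1:ℝ) else 0) - if a = d then 1 else 0) := by
    intro a ha b hb d hd
    have e : v b - v d = (v b - v c) - (v d - v c) := by abel
    rw [e, inner_sub_right, hP a ha b hb, hP a ha d hd]
    ring
  have hsum0 : ∑ i : {x // x ∈ s}, q0 i = ∑ a ∈ s.image Subtype.val, q a := by
    rw [Finset.sum_image (fun x _ y _ h => Subtype.coe_injective h)]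
    rw [← Finset.sum_attach s fun x => q x.1, Finset.univ_eq_attach]
    exact Finset.sum_congr rfl fun i _ => (hqa i).symm
  have hcnotimg : c ∉ s.image Subtype.val := by
    intro h
    obtain ⟨x, _, hxc⟩ := Finset.mem_image.mp h
    exact x.2 hxc
  have hsum : ∑ a ∈ S', q a = 0 := by
    rw [hS', Finset.sum_insert hcnotimg, hqc, ← hsum0]
    abel
  have hmemS' : ∀ j : {x // x ∈ s}, j.1.1 ∈ S' :=
    fun j => Finset.mem_insert_of_mem (Finset.mem_image_of_mem _ j.2)
  have hgen : ∀ j : {x // x ∈ s}, u j ∈ Wsp v S' := fun j =>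
    Submodule.subset_span
      (Set.mem_image2_of_mem (Finset.mem_coe.mpr (hmemS' j)) (Finset.mem_coe.mpr hcS'))
  have hq0span : ∀ i, q0 i ∈ Wsp v S' := fun i =>
    Submodule.sum_mem _ fun j _ => Submodule.smul_mem _ _ (hgen j)
  have hspan : ∀ a ∈ S', q a ∈ Wsp v S' := by
    intro a ha
    rcases hmem a ha with hac | ⟨i, rfl⟩
    · rw [hac] at ha ⊢
      rw [hqc]; exact Submodule.neg_mem _ (Submodule.sum_mem _ fun i _ => hq0span i)
    · rw [hqa]; exact hq0span i
  refine ⟨q, ⟨hprod, hsum, hspan⟩, ?_, ?_⟩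
  · intro i j
    rw [hqa, hqa]
    exact hQ0 i j
  · intro i
    rw [hqa, hqc, inner_neg_right, inner_sum]
    congr 1
    exact Finset.sum_congr rfl fun j _ => hQ0 i j

lemma subtype_img {c : Fin (n + 1)} {S : Finset (Fin (n + 1))} (hc : c ∈ S) :
    insert c (((S.erase c).subtype (· ≠ c)).image Subtype.val) = S := by
  ext a
  simp only [Finset.mem_insert, Finset.mem_image, Finset.mem_subtype, Finset.mem_erase]
  constructor
  · rintro (rfl | ⟨x, hx, rfl⟩)
    · exact hc
    · exact hx.2
  · intro ha
    by_cases h : a = c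
    · exact Or.inl h
    · exact Or.inr ⟨⟨a, h⟩, ⟨h, ha⟩, rfl⟩

lemma subtype_card' (c : Fin (n + 1)) (S : Finset (Fin (n + 1))) :
    ((S.erase c).subtype (· ≠ c)).card = (S.erase c).card := by
  rw [Finset.card_subtype]
  congr 1
  exact Finset.filter_true_of_mem fun x hx => (Finset.mem_erase.mp hx).1

theorem stmt10 (n k : ℕ) (hk : 2 ≤ k) (hkn : k ≤ n)
    (v : Fin (n + 1) → EuclideanSpace ℝ (Fin n)) (hv : AffineIndependent ℝ v)
    (hface : ∀ ℓ (s : Finset {x : Fin (n + 1) // x ≠ ℓ}), s.card = k →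
      IsStieltjes (subMat (vGram v ℓ) s)⁻¹ ∧ IsWDD (subMat (vGram v ℓ) s)⁻¹)
    (hnb : ∀ ℓ (m : ℕ), k < m → m ≤ n → ∀ s : Finset {x : Fin (n + 1) // x ≠ ℓ},
      s.card = m → IsNonblocking (subMat (vGram v ℓ) s)) :
    ∀ ℓ, IsStieltjes (vGram v ℓ)⁻¹ ∧ IsWDD (vGram v ℓ)⁻¹ := by
  classical
  -- Base case of the induction: all k-dimensional faces are nonobtuse.
  have base : ∀ S : Finset (Fin (n + 1)), S.card = k + 1 → Nobt v S := by
    intro S hS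
    have hSne : S.Nonempty := by rw [← Finset.card_pos, hS]; omega
    obtain ⟨c, hc⟩ := hSne
    set s : Finset {x : Fin (n + 1) // x ≠ c} := (S.erase c).subtype (· ≠ c) with hs
    have hset : insert c (s.image Subtype.val) = S := subtype_img hc
    have hcard : s.card = k := by
      rw [hs, subtype_card', Finset.card_erase_of_mem hc, hS]
      omega
    obtain ⟨q, hDF, hQ, hQc⟩ := build hv c s
    rw [hset] at hDF
    obtain ⟨hSt, hW⟩ := hface c s hcard
    refine ⟨q, hDF, ?_⟩
    have key : ∀ x ∈ S, x ≠ c → ∀ y ∈ S, y ≠ c → x ≠ y → ⟪q x, q y⟫ ≤ 0 := by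
      intro x hx hxc y hy hyc hxy
      have hxs : (⟨x, hxc⟩ : {x' // x' ≠ c}) ∈ s := by
        rw [hs, Finset.mem_subtype]; exact Finset.mem_erase.mpr ⟨hxc, hx⟩
      have hys : (⟨y, hyc⟩ : {x' // x' ≠ c}) ∈ s := by
        rw [hs, Finset.mem_subtype]; exact Finset.mem_erase.mpr ⟨hyc, hy⟩
      have := hQ ⟨⟨x, hxc⟩, hxs⟩ ⟨⟨y, hyc⟩, hys⟩
      rw [this]
      exact hSt.2 _ _ (fun h => hxy (congrArg (fun z => z.1.1) h))
    have keyc : ∀ x ∈ S, x ≠ c → ⟪q x, q c⟫ ≤ 0 := by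
      intro x hx hxc
      have hxs : (⟨x, hxc⟩ : {x' // x' ≠ c}) ∈ s := by
        rw [hs, Finset.mem_subtype]; exact Finset.mem_erase.mpr ⟨hxc, hx⟩
      have := hQc ⟨⟨x, hxc⟩, hxs⟩
      rw [this, neg_nonpos]
      exact hW _
    intro x hx y hy hxy
    by_cases hxc : x = c
    · by_cases hyc : y = c
      · exact absurd (hxc.trans hyc.symm) hxy
      · rw [hxc, real_inner_comm]; exact keyc y hy hyc
    · by_cases hyc : y = c
      · rw [hyc]; exact keyc x hx hxc
      · exact key x hx hxc y hy hyc hxy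
  -- Induction step.
  have step : ∀ t, k + 1 ≤ t → (∀ S : Finset (Fin (n + 1)), S.card = t → Nobt v S) →
      ∀ S : Finset (Fin (n + 1)), S.card = t + 1 → Nobt v S := by
    intro t ht IH S hS
    have hScard : S.card ≤ n + 1 := le_trans (Finset.card_le_univ S) (by simp)
    have htn : t ≤ n := by omega
    have hSne : S.Nonempty := by rw [← Finset.card_pos, hS]; omega
    obtain ⟨c, hc⟩ := hSne
    obtain ⟨q, hDF, -, -⟩ := build hv c ((S.erase c).subtype (· ≠ c))
    rw [subtype_img hc] at hDF
    refine ⟨q, hDF, ?_⟩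
    -- It suffices to prove one-sided nonpositivity for all ordered pairs.
    suffices h : ∀ x ∈ S, ∀ y ∈ S, x ≠ y → ⟪q y, q x⟫ ≤ 0 by
      intro x hx y hy hxy
      rw [real_inner_comm]; exact h x hx y hy hxy
    intro x hx y hy hxy
    -- the facet opposite y is nonobtuse
    obtain ⟨qT, hDFT, hTpairs⟩ := IH (S.erase y)
      (by rw [Finset.card_erase_of_mem hy, hS]; omega)
    -- nonblocking witness for column x of the vertex Gramian at y
    set sy : Finset {x' : Fin (n + 1) // x' ≠ y} := (S.erase y).subtype (· ≠ y) with hsy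
    have hsycard : sy.card = t := by
      rw [hsy, subtype_card', Finset.card_erase_of_mem hy, hS]
      omega
    have hxmem : (⟨x, hxy⟩ : {x' // x' ≠ y}) ∈ sy := by
      rw [hsy, Finset.mem_subtype]; exact Finset.mem_erase.mpr ⟨hxy, hx⟩
    obtain ⟨iw, hiwne, hiw⟩ := hnb y t (by omega) htn sy hsycard ⟨⟨x, hxy⟩, hxmem⟩
    have hiS : iw.1.1 ∈ S := by
      have h' : iw.1.1 ∈ S.erase y := Finset.mem_subtype.mp iw.2
      exact Finset.mem_of_mem_erase h'
    have hiy : iw.1.1 ≠ y := iw.1.2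
    have hix : iw.1.1 ≠ x := fun h => hiwne (Subtype.ext (Subtype.ext h))
    set i := iw.1.1 with hidef
    have hwit : ∀ kk ∈ S, kk ≠ y → ⟪v i - v y, v x - v kk⟫ ≤ 0 := by
      intro kk hkk hkky
      have hkmem : (⟨kk, hkky⟩ : {x' // x' ≠ y}) ∈ sy := by
        rw [hsy, Finset.mem_subtype]; exact Finset.mem_erase.mpr ⟨hkky, hkk⟩
      have h := hiw ⟨⟨kk, hkky⟩, hkmem⟩
      have e1 : (subMat (vGram v y) sy) iw ⟨⟨x, hxy⟩, hxmem⟩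
          = ⟪v i - v y, v x - v y⟫ := rfl
      have e2 : (subMat (vGram v y) sy) iw ⟨⟨kk, hkky⟩, hkmem⟩
          = ⟪v i - v y, v kk - v y⟫ := rfl
      rw [e1, e2] at h
      have e3 : v x - v kk = (v x - v y) - (v kk - v y) := by abel
      rw [e3, inner_sub_right]
      linarith
    have hxT : x ∈ S.erase y := Finset.mem_erase.mpr ⟨hxy, hx⟩
    have hiT : i ∈ S.erase y := Finset.mem_erase.mpr ⟨hiy, hiS⟩
    have hrepr := hDFT.repr hxT
    -- (1) upper bound
    have h1 : ⟪qT x, v i - v y⟫ ≤ 0 := by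
      conv_lhs => rw [hrepr]
      rw [sum_inner]
      apply Finset.sum_nonpos
      intro kk hkk
      rw [real_inner_smul_left]
      rcases eq_or_ne kk x with rfl | hkx
      · simp
      · have hTp : ⟪qT x, qT kk⟫ ≤ 0 := hTpairs x hxT kk hkk (fun h => hkx h.symm)
        have hw := hwit kk (Finset.mem_of_mem_erase hkk) (Finset.mem_erase.mp hkk).1
        have hw' : ⟪v kk - v x, v i - v y⟫ ≥ 0 := by
          have e : v kk - v x = -(v x - v kk) := by abel
          rw [e, inner_neg_left]
          have : ⟪v x - v kk, v i - v y⟫ ≤ 0 := by rw [real_inner_comm]; exact hw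
          linarith
        exact mul_nonpos_iff.mpr (Or.inr ⟨hTp, hw'⟩)
    -- ⟪qT x, q y⟫ = 0
    have hqTqy : ⟪qT x, q y⟫ = 0 := by
      conv_lhs => rw [hrepr]
      rw [sum_inner]
      apply Finset.sum_eq_zero
      intro kk hkk
      rw [real_inner_smul_left, real_inner_comm (q y) (v kk - v x),
        hDF.1 y hy kk (Finset.mem_of_mem_erase hkk) x hx]
      rw [if_neg (fun h => (Finset.mem_erase.mp hkk).1 h.symm),
        if_neg (fun h => hxy h.symm)]
      ring
    -- (2) the key identity
    have hID : ∑ j ∈ S.erase y, ⟪q y, q j⟫ • (v j - v i)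
        = ⟪q y, q y⟫ • (v i - v y) + q y := by
      have e2 : ∑ j ∈ S, ⟪q y, q j⟫ = 0 := by
        rw [← inner_sum, hDF.2.1, inner_zero_right]
      have e3 : ∑ j ∈ S, ⟪q y, q j⟫ • (v j - v y) = q y := (hDF.repr hy).symm
      have e4 : ∑ j ∈ S.erase y, ⟪q y, q j⟫ • (v j - v i)
          = ∑ j ∈ S, ⟪q y, q j⟫ • (v j - v i) - ⟪q y, q y⟫ • (v y - v i) :=
        (Finset.sum_erase_eq_sub hy).trans rfl
      have e1 : ∑ j ∈ S, ⟪q y, q j⟫ • (v j - v i)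
          = (∑ j ∈ S, ⟪q y, q j⟫ • (v j - v y)) + (∑ j ∈ S, ⟪q y, q j⟫) • (v y - v i) := by
        rw [Finset.sum_smul, ← Finset.sum_add_distrib]
        refine Finset.sum_congr rfl fun j _ => ?_
        rw [← smul_add]
        congr 1
        abel
      rw [e4, e1, e2, e3, zero_smul, add_zero]
      have : v i - v y = -(v y - v i) := by abel
      rw [this, smul_neg]
      abel
    -- evaluate ⟪qT x, ·⟫ on the identity
    have hA2 : ⟪q y, q y⟫ * ⟪qT x, v i - v y⟫ = ⟪q y, q x⟫ := by
      have hz : ⟪qT x, ∑ j ∈ S.erase y, ⟪q y, q j⟫ • (v j - v i)⟫ = ⟪q y, q x⟫ := by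
        rw [inner_sum]
        have e : ∀ j ∈ S.erase y, ⟪qT x, ⟪q y, q j⟫ • (v j - v i)⟫
            = ⟪q y, q j⟫ * (if x = j then 1 else 0) := by
          intro j hj
          rw [real_inner_smul_right,
            hDFT.1 x hxT j hj i hiT, if_neg (show ¬x = i from fun h => hix h.symm), sub_zero]
        rw [Finset.sum_congr rfl e]
        simp only [mul_ite, mul_one, mul_zero]
        rw [Finset.sum_ite_eq (S.erase y) x fun j => ⟪q y, q j⟫, if_pos hxT]
      rw [hID, inner_add_right, real_inner_smul_right, hqTqy, add_zero] at hz
      exact hz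
    -- positivity of ⟪q y, q y⟫
    have hQyy : 0 < ⟪q y, q y⟫ := by
      obtain ⟨b0, hb0, hb0y⟩ := Finset.exists_mem_ne (by omega : 1 < S.card) y
      have h1' : ⟪q y, v y - v b0⟫ = 1 := by
        rw [hDF.1 y hy y hy b0 hb0, if_pos rfl, if_neg (fun h => hb0y h.symm)]
        norm_num
      have hqy0 : q y ≠ 0 := by
        intro h0
        rw [h0, inner_zero_left] at h1'
        norm_num at h1'
      rw [real_inner_self_eq_norm_mul_norm]
      exact mul_pos (norm_pos_iff.mpr hqy0) (norm_pos_iff.mpr hqy0)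
    -- conclude
    nlinarith [hA2, hQyy, h1]
  -- Main induction
  have main : ∀ t, k + 1 ≤ t → ∀ S : Finset (Fin (n + 1)), S.card = t → Nobt v S := by
    intro t ht
    induction t, ht using Nat.le_induction with
    | base => exact base
    | succ t ht IH => exact step t ht IH
  -- Conclusion for the full simplex
  intro ℓ
  obtain ⟨q, hDF, hpairs⟩ := main (n + 1) (by omega) Finset.univ (by simp)
  have hGpd : (vGram v ℓ).PosDef := by
    refine gram_posDef (u := fun i : {x // x ≠ ℓ} => v i.1 - v ℓ) (fun i j => rfl) ?_
    have h1 := (affineIndependent_iff_linearIndependent_vsub ℝ v ℓ).mp hv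
    simpa [vsub_eq_sub] using h1
  have split : ∀ g : Fin (n + 1) → ℝ, ∑ j : {x // x ≠ ℓ}, g j.1 = (∑ j, g j) - g ℓ := by
    intro g
    rw [← Finset.sum_erase_add Finset.univ g (Finset.mem_univ ℓ)]
    rw [Finset.sum_subtype (p := fun x => x ≠ ℓ) (Finset.univ.erase ℓ) (fun x => by simp) g]
    ring
  have hexp : ∀ a : {x // x ≠ ℓ},
      q a.1 = ∑ j : Fin (n + 1), ⟪q a.1, q j⟫ • (v j - v ℓ) :=
    fun a => hDF.expand (hDF.2.2 a.1 (Finset.mem_univ _)) (Finset.mem_univ ℓ)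
  have hQG : (Matrix.of fun i j : {x // x ≠ ℓ} => ⟪q i.1, q j.1⟫) * vGram v ℓ = 1 := by
    ext a b
    rw [Matrix.mul_apply]
    have e0 : ∀ j : {x // x ≠ ℓ},
        (Matrix.of fun i j : {x // x ≠ ℓ} => ⟪q i.1, q j.1⟫) a j * vGram v ℓ j b
          = ⟪q a.1, q j.1⟫ * ⟪v j.1 - v ℓ, v b.1 - v ℓ⟫ := fun j => rfl
    rw [Finset.sum_congr rfl fun j _ => e0 j]
    have e1 : ∑ j : {x // x ≠ ℓ}, ⟪q a.1, q j.1⟫ * ⟪v j.1 - v ℓ, v b.1 - v ℓ⟫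
        = ∑ j : Fin (n + 1), ⟪q a.1, q j⟫ * ⟪v j - v ℓ, v b.1 - v ℓ⟫ := by
      rw [split fun j => ⟪q a.1, q j⟫ * ⟪v j - v ℓ, v b.1 - v ℓ⟫]
      simp
    rw [e1]
    have e2 : ∑ j : Fin (n + 1), ⟪q a.1, q j⟫ * ⟪v j - v ℓ, v b.1 - v ℓ⟫
        = ⟪q a.1, v b.1 - v ℓ⟫ := by
      conv_rhs => rw [hexp a]
      rw [sum_inner]
      exact Finset.sum_congr rfl fun j _ => by rw [real_inner_smul_left]
    rw [e2, hDF.1 a.1 (Finset.mem_univ _) b.1 (Finset.mem_univ _) ℓ (Finset.mem_univ _)]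
    rw [if_neg a.2, sub_zero, Matrix.one_apply]
    by_cases h : a = b
    · subst h; rw [if_pos rfl, if_pos rfl]
    · rw [if_neg (fun hh => h (Subtype.ext hh)), if_neg h]
  have hGinv : (vGram v ℓ)⁻¹ = Matrix.of fun i j : {x // x ≠ ℓ} => ⟪q i.1, q j.1⟫ :=
    Matrix.inv_eq_left_inv hQG
  have hqind : LinearIndependent ℝ (fun i : {x // x ≠ ℓ} => q i.1) := by
    rw [Fintype.linearIndependent_iff]
    intro g hg i
    have e : ⟪∑ j : {x // x ≠ ℓ}, g j • q j.1, v i.1 - v ℓ⟫ = g i := by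
      rw [sum_inner]
      have e' : ∀ j : {x // x ≠ ℓ}, ⟪g j • q j.1, v i.1 - v ℓ⟫
          = g j * (if j = i then 1 else 0) := by
        intro j
        rw [real_inner_smul_left,
          hDF.1 j.1 (Finset.mem_univ _) i.1 (Finset.mem_univ _) ℓ (Finset.mem_univ _)]
        rw [if_neg j.2, sub_zero]
        congr 1
        by_cases h : j = i
        · subst h; rw [if_pos rfl, if_pos rfl]
        · rw [if_neg (fun hh => h (Subtype.ext hh)), if_neg h]
      rw [Finset.sum_congr rfl fun j _ => e' j]
      simp only [mul_ite, mul_one, mul_zero]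
      rw [Finset.sum_ite_eq' Finset.univ i g, if_pos (Finset.mem_univ i)]
    rw [hg, inner_zero_left] at e
    exact e.symm
  have hQpd : (Matrix.of fun i j : {x // x ≠ ℓ} => ⟪q i.1, q j.1⟫).PosDef :=
    gram_posDef (fun i j => rfl) hqind
  refine ⟨⟨?_, ?_⟩, ?_⟩
  · rw [hGinv]; exact hQpd
  · intro i j hij
    rw [hGinv]
    exact hpairs i.1 (Finset.mem_univ _) j.1 (Finset.mem_univ _)
      (fun h => hij (Subtype.ext h))
  · intro a
    rw [hGinv]
    have e : ∑ j : {x // x ≠ ℓ}, (Matrix.of fun i j : {x // x ≠ ℓ} => ⟪q i.1, q j.1⟫) a j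
        = (∑ j : Fin (n + 1), ⟪q a.1, q j⟫) - ⟪q a.1, q ℓ⟫ :=
      split fun j => ⟪q a.1, q j⟫
    rw [e]
    have e2 : ∑ j : Fin (n + 1), ⟪q a.1, q j⟫ = 0 := by
      rw [← inner_sum]
      have : ∑ j ∈ (Finset.univ : Finset (Fin (n + 1))), q j = 0 := hDF.2.1
      rw [this, inner_zero_right]
    rw [e2]
    have := hpairs a.1 (Finset.mem_univ _) ℓ (Finset.mem_univ _) a.2
    linarith
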